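/- Let A = F[x,y]/(x²) and let φ be the F-algebra automorphism of A determined by φ(x) = −x, φ(y) = y. Let R = M₂(A) be the algebra of 2×2 matrices over A, equipped with the involution sending the matrix with entries (a b; c d) to the matrix with entries (φ(d) φ(b); φ(c) φ(a)), and let K = {r ∈ R : r* = −r}. Then every commutator [k₁,k₂] with k₁,k₂ ∈ K lies in x·M₂(A), the Lie subalgebra [K,K] generated by all such commutators is infinite-dimensional over F, and [K,K] is not finitely generated as a Lie algebra. -/

import Mathlib

/-- The commutative algebra `A = F[x,y]/(x²)` of Example 2, with `x = X 0`, `y = X 1`. -/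
noncomputable abbrev ExampleTwoAlg (F : Type*) [Field F] : Type _ :=
  MvPolynomial (Fin 2) F ⧸
    Ideal.span {(MvPolynomial.X 0 : MvPolynomial (Fin 2) F) ^ 2}

/-- The image of `x` in `A = F[x,y]/(x²)`. -/
noncomputable abbrev ExampleTwoAlg.x (F : Type*) [Field F] : ExampleTwoAlg F :=
  Ideal.Quotient.mk _ (MvPolynomial.X 0)

/-- The image of `y` in `A = F[x,y]/(x²)`. -/
noncomputable abbrev ExampleTwoAlg.y (F : Type*) [Field F] : ExampleTwoAlg F :=
  Ideal.Quotient.mk _ (MvPolynomial.X 1)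

/-- The involution `(a b; c d) ↦ (φ d, φ b; φ c, φ a)` on `R = M₂(A)`;
as an index map it is `(i,j) ↦ (1-j, 1-i)`. -/
noncomputable def exampleTwoInv (F : Type*) [Field F]
    (φ : ExampleTwoAlg F ≃ₐ[F] ExampleTwoAlg F) :
    Matrix (Fin 2) (Fin 2) (ExampleTwoAlg F) → Matrix (Fin 2) (Fin 2) (ExampleTwoAlg F) :=
  fun M => Matrix.of fun i j => φ (M (1 - j) (1 - i))

attribute [local instance 100] LieRing.ofAssociativeRing

set_option synthInstance.maxHeartbeats 1000000
set_option maxHeartbeats 1000000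

section Aux

variable (F : Type*) [Field F]

/-- the ideal `(x)` of `A`. -/
noncomputable abbrev exI : Ideal (ExampleTwoAlg F) := Ideal.span {ExampleTwoAlg.x F}

lemma ex_x_sq : (ExampleTwoAlg.x F) ^ 2 = 0 := by
  rw [show (ExampleTwoAlg.x F) ^ 2
      = Ideal.Quotient.mk _ ((MvPolynomial.X 0 : MvPolynomial (Fin 2) F) ^ 2) from
    (map_pow _ _ _).symm]
  exact Ideal.Quotient.eq_zero_iff_mem.2 (Ideal.subset_span rfl)

lemma ex_mul_zero {a b : ExampleTwoAlg F} (ha : a ∈ exI F) (hb : b ∈ exI F) : a * b = 0 := by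
  rw [Ideal.mem_span_singleton] at ha hb
  obtain ⟨a', rfl⟩ := ha
  obtain ⟨b', rfl⟩ := hb
  have : ExampleTwoAlg.x F * a' * (ExampleTwoAlg.x F * b')
      = (ExampleTwoAlg.x F) ^ 2 * (a' * b') := by ring
  rw [this, ex_x_sq, zero_mul]

variable {F}
variable (φ : ExampleTwoAlg F ≃ₐ[F] ExampleTwoAlg F)
    (hφx : φ (ExampleTwoAlg.x F) = - ExampleTwoAlg.x F)
    (hφy : φ (ExampleTwoAlg.y F) = ExampleTwoAlg.y F)

include hφx hφy in
lemma ex_sub_mem (a : ExampleTwoAlg F) : φ a - a ∈ exI F := by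
  have hx0 : Ideal.Quotient.mk (exI F) (ExampleTwoAlg.x F) = 0 :=
    Ideal.Quotient.eq_zero_iff_mem.2 (Ideal.subset_span rfl)
  have h : (Ideal.Quotient.mkₐ F (exI F)).comp φ.toAlgHom = Ideal.Quotient.mkₐ F (exI F) := by
    apply Ideal.Quotient.algHom_ext
    apply MvPolynomial.algHom_ext
    intro i
    fin_cases i
    · show Ideal.Quotient.mk (exI F) (φ (ExampleTwoAlg.x F))
          = Ideal.Quotient.mk (exI F) (ExampleTwoAlg.x F)
      rw [hφx, map_neg, hx0, neg_zero]
    · show Ideal.Quotient.mk (exI F) (φ (ExampleTwoAlg.y F))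
          = Ideal.Quotient.mk (exI F) (ExampleTwoAlg.y F)
      rw [hφy]
  have := AlgHom.congr_fun h a
  simp only [AlgHom.comp_apply, Ideal.Quotient.mkₐ_eq_mk, AlgEquiv.toAlgHom_eq_coe,
    AlgHom.coe_coe] at this
  exact (Ideal.Quotient.mk_eq_mk_iff_sub_mem _ _).1 this

include hφx hφy in
lemma ex_skew_mem (hchar : (2 : F) ≠ 0) {a : ExampleTwoAlg F} (ha : φ a = -a) :
    a ∈ exI F := by
  have h := ex_sub_mem φ hφx hφy a
  rw [ha] at h
  have h2 : a + a ∈ exI F := by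
    have := (exI F).neg_mem h
    simpa [neg_sub, sub_neg_eq_add] using this
  have : a = algebraMap F _ (2⁻¹ : F) * (a + a) := by
    rw [← Algebra.smul_def, ← two_smul F a, smul_smul, inv_mul_cancel₀ hchar, one_smul]
  rw [this]
  exact Ideal.mul_mem_left _ _ h2

end Aux

section Aux2

variable (F : Type*) [Field F]

/-- Matrices with all entries in `(x)`. -/
noncomputable def exW : LieSubalgebra F (Matrix (Fin 2) (Fin 2) (ExampleTwoAlg F)) where
  carrier := {M | ∀ i j, M i j ∈ exI F}
  add_mem' := fun {M N} hM hN i j => by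
    simpa [Matrix.add_apply] using add_mem (hM i j) (hN i j)
  zero_mem' := fun i j => by simp
  smul_mem' := fun c M hM i j => by
    rw [Matrix.smul_apply]
    exact Submodule.smul_mem ((exI F).restrictScalars F) c (hM i j)
  lie_mem' := fun {M N} hM hN i j => by
    have e : ⁅M, N⁆ i j
        = M i 0 * N 0 j + M i 1 * N 1 j - (N i 0 * M 0 j + N i 1 * M 1 j) := by
      simp [Ring.lie_def, Matrix.sub_apply, Matrix.mul_apply, Fin.sum_univ_two]
    rw [e, ex_mul_zero F (hM i 0) (hN 0 j), ex_mul_zero F (hM i 1) (hN 1 j),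
      ex_mul_zero F (hN i 0) (hM 0 j), ex_mul_zero F (hN i 1) (hM 1 j)]
    simp

lemma exW_mul_zero {M N : Matrix (Fin 2) (Fin 2) (ExampleTwoAlg F)}
    (hM : ∀ i j, M i j ∈ exI F) (hN : ∀ i j, N i j ∈ exI F) : M * N = 0 := by
  ext i j
  rw [Matrix.mul_apply, Fin.sum_univ_two,
    ex_mul_zero F (hM i 0) (hN 0 j), ex_mul_zero F (hM i 1) (hN 1 j)]
  simp

variable {F}
variable (φ : ExampleTwoAlg F ≃ₐ[F] ExampleTwoAlg F)
    (hφx : φ (ExampleTwoAlg.x F) = - ExampleTwoAlg.x F)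
    (hφy : φ (ExampleTwoAlg.y F) = ExampleTwoAlg.y F)

lemma ex_skew_entries {k : Matrix (Fin 2) (Fin 2) (ExampleTwoAlg F)}
    (hk : exampleTwoInv F φ k = -k) :
    ∀ i j, φ (k (1 - j) (1 - i)) = -(k i j) := by
  intro i j
  have := congrFun (congrFun hk i) j
  simpa [exampleTwoInv] using this

include hφx hφy in
lemma ex_comm_entries (hchar : (2 : F) ≠ 0)
    {k₁ k₂ : Matrix (Fin 2) (Fin 2) (ExampleTwoAlg F)}
    (h₁ : exampleTwoInv F φ k₁ = -k₁) (h₂ : exampleTwoInv F φ k₂ = -k₂) :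
    ∀ i j, ⁅k₁, k₂⁆ i j ∈ exI F := by
  have hb₁ : k₁ 0 1 ∈ exI F := by
    have := ex_skew_entries φ h₁ 0 1
    norm_num at this
    exact ex_skew_mem φ hφx hφy hchar this
  have hc₁ : k₁ 1 0 ∈ exI F := by
    have := ex_skew_entries φ h₁ 1 0
    norm_num at this
    exact ex_skew_mem φ hφx hφy hchar this
  have hb₂ : k₂ 0 1 ∈ exI F := by
    have := ex_skew_entries φ h₂ 0 1
    norm_num at this
    exact ex_skew_mem φ hφx hφy hchar this
  have hc₂ : k₂ 1 0 ∈ exI F := by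
    have := ex_skew_entries φ h₂ 1 0
    norm_num at this
    exact ex_skew_mem φ hφx hφy hchar this
  intro i j
  have e : ⁅k₁, k₂⁆ i j
      = k₁ i 0 * k₂ 0 j + k₁ i 1 * k₂ 1 j - (k₂ i 0 * k₁ 0 j + k₂ i 1 * k₁ 1 j) := by
    simp [Ring.lie_def, Matrix.sub_apply, Matrix.mul_apply, Fin.sum_univ_two]
  rw [e]
  fin_cases i <;> fin_cases j <;>
    simp only [Fin.zero_eta, Fin.mk_one, Fin.isValue]
  · have e2 : k₁ 0 0 * k₂ 0 0 + k₁ 0 1 * k₂ 1 0 - (k₂ 0 0 * k₁ 0 0 + k₂ 0 1 * k₁ 1 0)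
        = k₁ 0 1 * k₂ 1 0 - k₂ 0 1 * k₁ 1 0 := by ring
    simpa [e2] using sub_mem (Ideal.mul_mem_right _ _ hb₁) (Ideal.mul_mem_right _ _ hb₂)
  · exact sub_mem
      (add_mem (Ideal.mul_mem_left _ _ hb₂) (Ideal.mul_mem_right _ _ hb₁))
      (add_mem (Ideal.mul_mem_left _ _ hb₁) (Ideal.mul_mem_right _ _ hb₂))
  · exact sub_mem
      (add_mem (Ideal.mul_mem_right _ _ hc₁) (Ideal.mul_mem_left _ _ hc₂))
      (add_mem (Ideal.mul_mem_right _ _ hc₂) (Ideal.mul_mem_left _ _ hc₁))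
  · have e2 : k₁ 1 0 * k₂ 0 1 + k₁ 1 1 * k₂ 1 1 - (k₂ 1 0 * k₁ 0 1 + k₂ 1 1 * k₁ 1 1)
        = k₁ 1 0 * k₂ 0 1 - k₂ 1 0 * k₁ 0 1 := by ring
    simpa [e2] using sub_mem (Ideal.mul_mem_right _ _ hc₁) (Ideal.mul_mem_right _ _ hc₂)

end Aux2

section Aux3

variable (F : Type*) [Field F]

lemma ex_indep : LinearIndependent F
    (fun n : ℕ => ExampleTwoAlg.x F * ExampleTwoAlg.y F ^ n) := by
  rw [linearIndependent_iff']
  intro s g hsum m hm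
  classical
  set J : Ideal (MvPolynomial (Fin 2) F) :=
    Ideal.span {(MvPolynomial.X 0 : MvPolynomial (Fin 2) F) ^ 2} with hJ
  have hmk : ∀ n : ℕ, ExampleTwoAlg.x F * ExampleTwoAlg.y F ^ n
      = Ideal.Quotient.mkₐ F J (MvPolynomial.X 0 * MvPolynomial.X 1 ^ n) := by
    intro n
    rw [map_mul, map_pow]
    rfl
  have hp : (∑ n ∈ s, g n • (MvPolynomial.X 0 * MvPolynomial.X 1 ^ n : MvPolynomial (Fin 2) F))
      ∈ J := by
    rw [← Ideal.Quotient.eq_zero_iff_mem]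
    have : Ideal.Quotient.mkₐ F J
        (∑ n ∈ s, g n • (MvPolynomial.X 0 * MvPolynomial.X 1 ^ n : MvPolynomial (Fin 2) F))
        = 0 := by
      rw [map_sum]
      simp only [map_smul]
      rw [← hsum]
      exact Finset.sum_congr rfl (fun n _ => by rw [hmk n])
    rw [Ideal.Quotient.mkₐ_eq_mk] at this
    exact this
  rw [hJ, Ideal.mem_span_singleton] at hp
  obtain ⟨q, hq⟩ := hp
  have hco := congrArg
    (MvPolynomial.coeff (Finsupp.single (0 : Fin 2) 1 + Finsupp.single (1 : Fin 2) m)) hq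
  have hmon : ∀ n : ℕ, (MvPolynomial.X 0 * MvPolynomial.X 1 ^ n : MvPolynomial (Fin 2) F)
      = MvPolynomial.monomial (Finsupp.single (0 : Fin 2) 1 + Finsupp.single (1 : Fin 2) n)
        (1 : F) := by
    intro n
    rw [MvPolynomial.X_pow_eq_monomial,
      show (MvPolynomial.X 0 : MvPolynomial (Fin 2) F)
        = MvPolynomial.monomial (Finsupp.single (0 : Fin 2) 1) (1 : F) from by
          rw [← MvPolynomial.X_pow_eq_monomial, pow_one],
      MvPolynomial.monomial_mul, one_mul]
  have hL : MvPolynomial.coeff (Finsupp.single (0 : Fin 2) 1 + Finsupp.single (1 : Fin 2) m)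
      (∑ n ∈ s, g n • (MvPolynomial.X 0 * MvPolynomial.X 1 ^ n : MvPolynomial (Fin 2) F))
      = g m := by
    rw [MvPolynomial.coeff_sum]
    rw [Finset.sum_eq_single m]
    · rw [MvPolynomial.coeff_smul, hmon, MvPolynomial.coeff_monomial, if_pos rfl, smul_eq_mul,
        mul_one]
    · intro n _ hn
      rw [MvPolynomial.coeff_smul, hmon, MvPolynomial.coeff_monomial, if_neg, smul_eq_mul,
        mul_zero]
      intro hcontra
      apply hn
      have h1 := DFunLike.congr_fun hcontra (1 : Fin 2)
      simpa [Finsupp.single_eq_of_ne (by norm_num : (0 : Fin 2) ≠ 1)] using h1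
    · intro hms
      exact absurd hm hms
  have hR : MvPolynomial.coeff (Finsupp.single (0 : Fin 2) 1 + Finsupp.single (1 : Fin 2) m)
      ((MvPolynomial.X 0 : MvPolynomial (Fin 2) F) ^ 2 * q) = 0 := by
    rw [pow_two, mul_assoc, MvPolynomial.coeff_X_mul, MvPolynomial.coeff_X_mul']
    rw [if_neg]
    simp [Finsupp.single_eq_of_ne (by norm_num : (1 : Fin 2) ≠ 0)]
  rw [hL, hR] at hco
  exact hco

end Aux3

section Aux4

variable (F : Type*) [Field F]

/-- The skew matrix `xE₀₁`. -/
noncomputable def exK1 : Matrix (Fin 2) (Fin 2) (ExampleTwoAlg F) :=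
  Matrix.of ![![0, ExampleTwoAlg.x F], ![0, 0]]

/-- The skew matrix `diag(c, -c)` with `c = -(2⁻¹ • yⁿ)`. -/
noncomputable def exK2 (n : ℕ) : Matrix (Fin 2) (Fin 2) (ExampleTwoAlg F) :=
  Matrix.of ![![-((2 : F)⁻¹ • ExampleTwoAlg.y F ^ n), 0],
    ![0, (2 : F)⁻¹ • ExampleTwoAlg.y F ^ n]]

/-- The matrix `x yⁿ E₀₁`. -/
noncomputable def exw (n : ℕ) : Matrix (Fin 2) (Fin 2) (ExampleTwoAlg F) :=
  Matrix.of ![![0, ExampleTwoAlg.x F * ExampleTwoAlg.y F ^ n], ![0, 0]]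

variable {F}
variable (φ : ExampleTwoAlg F ≃ₐ[F] ExampleTwoAlg F)
    (hφx : φ (ExampleTwoAlg.x F) = - ExampleTwoAlg.x F)
    (hφy : φ (ExampleTwoAlg.y F) = ExampleTwoAlg.y F)

include hφx in
lemma exK1_skew : exampleTwoInv F φ (exK1 F) = -(exK1 F) := by
  ext i j
  fin_cases i <;> fin_cases j <;>
    simp [exampleTwoInv, exK1, hφx]

include hφy in
lemma exK2_skew (n : ℕ) : exampleTwoInv F φ (exK2 F n) = -(exK2 F n) := by
  have hyn : φ (ExampleTwoAlg.y F ^ n) = ExampleTwoAlg.y F ^ n := by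
    rw [map_pow, hφy]
  ext i j
  fin_cases i <;> fin_cases j <;>
    simp [exampleTwoInv, exK2, map_smul, hyn]

lemma exw_eq_bracket (hchar : (2 : F) ≠ 0) (n : ℕ) :
    exw F n = ⁅exK1 F, exK2 F n⁆ := by
  have key : ExampleTwoAlg.x F * ((2 : F)⁻¹ • ExampleTwoAlg.y F ^ n)
      + ((2 : F)⁻¹ • ExampleTwoAlg.y F ^ n) * ExampleTwoAlg.x F
      = ExampleTwoAlg.x F * ExampleTwoAlg.y F ^ n := by
    rw [mul_smul_comm, smul_mul_assoc,
      mul_comm (ExampleTwoAlg.y F ^ n) (ExampleTwoAlg.x F), ← two_smul F, smul_smul,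
      mul_inv_cancel₀ hchar, one_smul]
  ext i j
  fin_cases i <;> fin_cases j <;>
    simp [exK1, exK2, exw, Ring.lie_def, Matrix.sub_apply, Matrix.mul_apply,
      Fin.sum_univ_two]
  rw [← smul_mul_assoc]
  exact key.symm

/-- the `(0,1)`-entry as a linear map. -/
noncomputable def exEntry01 :
    Matrix (Fin 2) (Fin 2) (ExampleTwoAlg F) →ₗ[F] ExampleTwoAlg F where
  toFun M := M 0 1
  map_add' _ _ := rfl
  map_smul' _ _ := rfl

lemma exw_indep : LinearIndependent F (exw F) := by
  apply LinearIndependent.of_comp (exEntry01 (F := F))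
  have he : (exEntry01 (F := F)) ∘ (exw F)
      = fun n : ℕ => ExampleTwoAlg.x F * ExampleTwoAlg.y F ^ n := by
    funext n
    simp [exEntry01, exw]
    rfl
  rw [he]
  exact ex_indep F

lemma ex_span_eq_lieSpan {s : Set (Matrix (Fin 2) (Fin 2) (ExampleTwoAlg F))}
    (hs : s ⊆ exW F) :
    ((LieSubalgebra.lieSpan F (Matrix (Fin 2) (Fin 2) (ExampleTwoAlg F)) s) :
        Submodule F (Matrix (Fin 2) (Fin 2) (ExampleTwoAlg F)))
      = Submodule.span F s := by
  have hspanW : Submodule.span F s ≤ (exW F : Submodule F _) := by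
    rw [Submodule.span_le]
    exact hs
  let P : LieSubalgebra F (Matrix (Fin 2) (Fin 2) (ExampleTwoAlg F)) :=
    { Submodule.span F s with
      lie_mem' := by
        intro a b ha hb
        have ha' : ∀ i j, a i j ∈ exI F := hspanW ha
        have hb' : ∀ i j, b i j ∈ exI F := hspanW hb
        have : ⁅a, b⁆ = 0 := by
          rw [Ring.lie_def, exW_mul_zero F ha' hb', exW_mul_zero F hb' ha', sub_zero]
        show ⁅a, b⁆ ∈ Submodule.span F s
        rw [this]
        exact zero_mem _ }
  apply le_antisymm
  · exact fun z hz => (LieSubalgebra.lieSpan_le (K := P)).2 Submodule.subset_span hz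
  · rw [Submodule.span_le]
    exact LieSubalgebra.subset_lieSpan

end Aux4

set_option synthInstance.maxHeartbeats 1000000 in
set_option maxHeartbeats 1000000 in
/-- **Example 2.**  Let `A = F[x,y]/(x²)`, `φ` the `F`-algebra automorphism of `A` with
`φ(x) = -x`, `φ(y) = y`, and `R = M₂(A)` with the involution
`(a b; c d)* = (φ d, φ b; φ c, φ a)`; let `K` be the skew-symmetric elements.  Then every
commutator `[k₁,k₂]` with `k₁, k₂ ∈ K` lies in `x · M₂(A)`, the Lie subalgebra `[K,K]`
is infinite-dimensional over `F`, and `[K,K]` is not finitely generated as a Lie algebra. -/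
theorem exampleTwo_skew_commutators_not_fg
    (F : Type*) [Field F] (hchar : (2 : F) ≠ 0)
    (φ : ExampleTwoAlg F ≃ₐ[F] ExampleTwoAlg F)
    (hφx : φ (ExampleTwoAlg.x F) = - ExampleTwoAlg.x F)
    (hφy : φ (ExampleTwoAlg.y F) = ExampleTwoAlg.y F) :
    (∀ k₁ k₂ : Matrix (Fin 2) (Fin 2) (ExampleTwoAlg F),
        exampleTwoInv F φ k₁ = -k₁ → exampleTwoInv F φ k₂ = -k₂ →
        ∃ N : Matrix (Fin 2) (Fin 2) (ExampleTwoAlg F),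
          ∀ i j, ⁅k₁, k₂⁆ i j = ExampleTwoAlg.x F * N i j) ∧
    ¬ FiniteDimensional F
        (LieSubalgebra.lieSpan F (Matrix (Fin 2) (Fin 2) (ExampleTwoAlg F))
          {z | ∃ k₁ k₂ : Matrix (Fin 2) (Fin 2) (ExampleTwoAlg F),
            exampleTwoInv F φ k₁ = -k₁ ∧ exampleTwoInv F φ k₂ = -k₂ ∧ z = ⁅k₁, k₂⁆}) ∧
    ¬ ∃ S : Finset (Matrix (Fin 2) (Fin 2) (ExampleTwoAlg F)),
        (S : Set (Matrix (Fin 2) (Fin 2) (ExampleTwoAlg F))) ⊆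
          (LieSubalgebra.lieSpan F (Matrix (Fin 2) (Fin 2) (ExampleTwoAlg F))
            {z | ∃ k₁ k₂ : Matrix (Fin 2) (Fin 2) (ExampleTwoAlg F),
              exampleTwoInv F φ k₁ = -k₁ ∧ exampleTwoInv F φ k₂ = -k₂ ∧ z = ⁅k₁, k₂⁆} :
            Set (Matrix (Fin 2) (Fin 2) (ExampleTwoAlg F))) ∧
        LieSubalgebra.lieSpan F (Matrix (Fin 2) (Fin 2) (ExampleTwoAlg F))
            (S : Set (Matrix (Fin 2) (Fin 2) (ExampleTwoAlg F))) =
          LieSubalgebra.lieSpan F (Matrix (Fin 2) (Fin 2) (ExampleTwoAlg F))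
            {z | ∃ k₁ k₂ : Matrix (Fin 2) (Fin 2) (ExampleTwoAlg F),
              exampleTwoInv F φ k₁ = -k₁ ∧ exampleTwoInv F φ k₂ = -k₂ ∧ z = ⁅k₁, k₂⁆} := by
  classical
  set S : Set (Matrix (Fin 2) (Fin 2) (ExampleTwoAlg F)) :=
    {z | ∃ k₁ k₂ : Matrix (Fin 2) (Fin 2) (ExampleTwoAlg F),
      exampleTwoInv F φ k₁ = -k₁ ∧ exampleTwoInv F φ k₂ = -k₂ ∧ z = ⁅k₁, k₂⁆} with hS
  have hSsubW : S ⊆ (exW F : Set (Matrix (Fin 2) (Fin 2) (ExampleTwoAlg F))) := by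
    rintro z ⟨k₁, k₂, h₁, h₂, rfl⟩
    exact ex_comm_entries φ hφx hφy hchar h₁ h₂
  have hmemL : ∀ n : ℕ,
      exw F n ∈ LieSubalgebra.lieSpan F (Matrix (Fin 2) (Fin 2) (ExampleTwoAlg F)) S :=
    fun n => LieSubalgebra.subset_lieSpan
      ⟨exK1 F, exK2 F n, exK1_skew φ hφx, exK2_skew φ hφy n, exw_eq_bracket hchar n⟩
  have hND : ¬ FiniteDimensional F
      (LieSubalgebra.lieSpan F (Matrix (Fin 2) (Fin 2) (ExampleTwoAlg F)) S) := by
    intro hFD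
    haveI := hFD
    have hindep : LinearIndependent F (fun n : ℕ =>
        (⟨exw F n, hmemL n⟩ :
          LieSubalgebra.lieSpan F (Matrix (Fin 2) (Fin 2) (ExampleTwoAlg F)) S)) := by
      apply LinearIndependent.of_comp
        ((LieSubalgebra.lieSpan F (Matrix (Fin 2) (Fin 2) (ExampleTwoAlg F)) S :
          Submodule F (Matrix (Fin 2) (Fin 2) (ExampleTwoAlg F))).subtype)
      exact exw_indep (F := F)
    exact Module.Finite.not_linearIndependent_of_infinite _ hindep
  refine ⟨?_, hND, ?_⟩
  · intro k₁ k₂ h₁ h₂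
    have hmem := ex_comm_entries φ hφx hφy hchar h₁ h₂
    choose N hN using fun i j => Ideal.mem_span_singleton'.1 (hmem i j)
    exact ⟨Matrix.of N, fun i j => (hN i j).symm.trans (mul_comm _ _)⟩
  · rintro ⟨S', hsub, heq⟩
    apply hND
    have hS'W : (↑S' : Set (Matrix (Fin 2) (Fin 2) (ExampleTwoAlg F)))
        ⊆ (exW F : Set (Matrix (Fin 2) (Fin 2) (ExampleTwoAlg F))) := by
      intro z hz
      exact (LieSubalgebra.lieSpan_le (K := exW F)).2 hSsubW (hsub hz)
    have hsp := ex_span_eq_lieSpan (F := F)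
      (s := (↑S' : Set (Matrix (Fin 2) (Fin 2) (ExampleTwoAlg F)))) hS'W
    rw [heq] at hsp
    have hfin : FiniteDimensional F
        (Submodule.span F (↑S' : Set (Matrix (Fin 2) (Fin 2) (ExampleTwoAlg F)))) :=
      FiniteDimensional.span_finset F S'
    rw [← hsp] at hfin
    exact hfin
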